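/- The functions X₀(t) = (1/2) sech t and Y₀(t) = −(1/2) sech t (tanh t + sech t) + 1/4 satisfy, for all t ∈ ℝ, the differential equations X₀'(t) = Y₀(t) + 2X₀(t)² − 1/4 and Y₀'(t) = −4X₀(t)Y₀(t) − 16X₀(t)³ + 2X₀(t), together with the boundary conditions (X₀(t), Y₀(t)) → (0, 1/4) as t → +∞ and as t → −∞. -/

import Mathlib

open Filter Topology

noncomputable section

/-- `X₀(t) = (1/2) sech t`. -/
def X0 (t : ℝ) : ℝ := (1 / 2) * (1 / Real.cosh t)

/-- `Y₀(t) = -(1/2) sech t (tanh t + sech t) + 1/4`. -/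
def Y0 (t : ℝ) : ℝ :=
  -(1 / 2) * (1 / Real.cosh t) * (Real.tanh t + 1 / Real.cosh t) + 1 / 4

lemma cosh_tendsto_atTop : Tendsto Real.cosh atTop atTop := by
  have : ∀ t : ℝ, Real.exp t / 2 ≤ Real.cosh t := by
    intro t
    rw [Real.cosh_eq]
    have := (Real.exp_pos (-t)).le
    linarith
  exact tendsto_atTop_mono this ((Real.tendsto_exp_atTop).atTop_div_const (by norm_num))

lemma cosh_tendsto_atBot : Tendsto Real.cosh atBot atTop := by
  have : Real.cosh = fun t => Real.cosh (-t) := by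
    funext t; rw [Real.cosh_neg]
  rw [this]
  exact cosh_tendsto_atTop.comp tendsto_neg_atBot_atTop

lemma sech_tendsto_zero_atTop : Tendsto (fun t => 1 / Real.cosh t) atTop (𝓝 0) := by
  simp only [one_div]; exact cosh_tendsto_atTop.inv_tendsto_atTop

lemma sech_tendsto_zero_atBot : Tendsto (fun t => 1 / Real.cosh t) atBot (𝓝 0) := by
  simp only [one_div]; exact cosh_tendsto_atBot.inv_tendsto_atTop

lemma X0_deriv (t : ℝ) :
    HasDerivAt X0 (-(Real.sinh t) / (2 * Real.cosh t ^ 2)) t := by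
  have hc := Real.cosh_pos t
  have h : HasDerivAt (fun t => (1:ℝ) / 2 * (1 / Real.cosh t))
      ((1 / 2) * (-(Real.sinh t) / Real.cosh t ^ 2)) t :=
    (((hasDerivAt_const t (1:ℝ)).div (Real.hasDerivAt_cosh t) hc.ne').const_mul
      (1/2 : ℝ)).congr_deriv (by ring)
  exact h.congr_deriv (by ring)

lemma Y0_deriv (t : ℝ) :
    HasDerivAt Y0
      (-(1/2) * ((-(Real.sinh t) / Real.cosh t ^ 2) * (Real.tanh t + 1 / Real.cosh t)
        + (1 / Real.cosh t) * ((1 / Real.cosh t ^ 2) + -(Real.sinh t) / Real.cosh t ^ 2))) t := by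
  have hc := (Real.cosh_pos t).ne'
  have hsech : HasDerivAt (fun t => 1 / Real.cosh t) (-(Real.sinh t) / Real.cosh t ^ 2) t := by
    have := (hasDerivAt_const t (1:ℝ)).div (Real.hasDerivAt_cosh t) hc
    exact this.congr_deriv (by ring)
  have htanh : HasDerivAt Real.tanh (1 / Real.cosh t ^ 2) t := by
    have h : HasDerivAt (fun t => Real.sinh t / Real.cosh t)
        ((Real.cosh t * Real.cosh t - Real.sinh t * Real.sinh t) / Real.cosh t ^ 2) t :=
      (Real.hasDerivAt_sinh t).div (Real.hasDerivAt_cosh t) hc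
    have h2 : HasDerivAt (fun t => Real.sinh t / Real.cosh t) (1 / Real.cosh t ^ 2) t := by
      convert h using 1
      rw [show Real.cosh t * Real.cosh t - Real.sinh t * Real.sinh t
          = Real.cosh t ^ 2 - Real.sinh t ^ 2 by ring, Real.cosh_sq_sub_sinh_sq]
    have heq : Real.tanh = fun t => Real.sinh t / Real.cosh t :=
      funext Real.tanh_eq_sinh_div_cosh
    rw [heq]; exact h2
  have : HasDerivAt (fun t => -(1/2) * (1 / Real.cosh t) * (Real.tanh t + 1 / Real.cosh t) + 1/4)
      (-(1/2) * ((-(Real.sinh t) / Real.cosh t ^ 2) * (Real.tanh t + 1 / Real.cosh t)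
        + (1 / Real.cosh t) * ((1 / Real.cosh t ^ 2) + -(Real.sinh t) / Real.cosh t ^ 2))) t := by
    have hmul := ((hsech.const_mul (-(1/2):ℝ)).mul (htanh.add hsech)).add_const (1/4)
    refine hmul.congr_deriv ?_
    simp only [Pi.add_apply]
    ring
  exact this

/-- `X₀, Y₀` solve `X₀' = Y₀ + 2X₀² - 1/4`, `Y₀' = -4X₀Y₀ - 16X₀³ + 2X₀`,
with `(X₀, Y₀) → (0, 1/4)` as `t → ±∞`. -/
theorem lowest_order_separatrix_solution :
    (∀ t : ℝ, HasDerivAt X0 (Y0 t + 2 * X0 t ^ 2 - 1 / 4) t) ∧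
    (∀ t : ℝ, HasDerivAt Y0 (-4 * X0 t * Y0 t - 16 * X0 t ^ 3 + 2 * X0 t) t) ∧
    Tendsto (fun t => (X0 t, Y0 t)) atTop (𝓝 ((0 : ℝ), (1 / 4 : ℝ))) ∧
    Tendsto (fun t => (X0 t, Y0 t)) atBot (𝓝 ((0 : ℝ), (1 / 4 : ℝ))) := by
  have key : ∀ t : ℝ, Real.cosh t ^ 2 - Real.sinh t ^ 2 = 1 := fun t => Real.cosh_sq_sub_sinh_sq t
  have hX : ∀ t : ℝ, HasDerivAt X0 (Y0 t + 2 * X0 t ^ 2 - 1 / 4) t := by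
    intro t
    have hc := (Real.cosh_pos t).ne'
    refine (X0_deriv t).congr_deriv ?_
    simp only [X0, Y0, Real.tanh_eq_sinh_div_cosh]
    field_simp
    ring
  have hY : ∀ t : ℝ, HasDerivAt Y0 (-4 * X0 t * Y0 t - 16 * X0 t ^ 3 + 2 * X0 t) t := by
    intro t
    have hc := (Real.cosh_pos t).ne'
    refine (Y0_deriv t).congr_deriv ?_
    simp only [X0, Y0, Real.tanh_eq_sinh_div_cosh]
    field_simp
    linear_combination (-4) * key t
  have hbound : ∀ (l : Filter ℝ), Tendsto (fun t => 1 / Real.cosh t) l (𝓝 0) →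
      Tendsto (fun t => (X0 t, Y0 t)) l (𝓝 ((0:ℝ), (1/4:ℝ))) := by
    intro l hl
    refine Tendsto.prodMk_nhds ?_ ?_
    · have h := hl.const_mul (1/2:ℝ)
      rw [mul_zero] at h
      exact h
    · have h0 : Tendsto (fun t => -(1/2) * (1 / Real.cosh t) * (Real.tanh t + 1 / Real.cosh t)) l (𝓝 0) := by
        refine squeeze_zero_norm ?_ hl
        intro t
        have hc : (1:ℝ) ≤ Real.cosh t := Real.one_le_cosh t
        have h1 : 0 < Real.cosh t := Real.cosh_pos t
        have hsech : 0 < 1 / Real.cosh t := by positivity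
        have hsle : 1 / Real.cosh t ≤ 1 := by
          rw [div_le_one h1]; exact hc
        have hs : |Real.sinh t| ≤ Real.cosh t := by
          have h2 := Real.cosh_sq_sub_sinh_sq t
          nlinarith [abs_nonneg (Real.sinh t), sq_abs (Real.sinh t), Real.cosh_pos t]
        have htanh : |Real.tanh t| ≤ 1 := by
          rw [Real.tanh_eq_sinh_div_cosh, abs_div, abs_of_pos h1, div_le_one h1]
          exact hs
        rw [Real.norm_eq_abs, abs_mul, abs_mul]
        have : |Real.tanh t + 1 / Real.cosh t| ≤ 2 := by
          calc |Real.tanh t + 1 / Real.cosh t| ≤ |Real.tanh t| + |1 / Real.cosh t| := abs_add_le _ _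
          _ ≤ 1 + 1 := by
              refine add_le_add htanh ?_
              rw [abs_of_pos hsech]; exact hsle
          _ = 2 := by norm_num
        calc |(-(1/2):ℝ)| * |1 / Real.cosh t| * |Real.tanh t + 1 / Real.cosh t|
            ≤ |(-(1/2):ℝ)| * |1 / Real.cosh t| * 2 := by
              apply mul_le_mul_of_nonneg_left this (by positivity)
          _ = 1 / Real.cosh t := by
              rw [abs_of_pos hsech, abs_neg, abs_of_pos (by norm_num : (0:ℝ) < 1/2)]
              ring
      have h14 := h0.add_const (1/4 : ℝ)
      rw [zero_add] at h14
      exact h14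
  exact ⟨hX, hY, hbound atTop sech_tendsto_zero_atTop, hbound atBot sech_tendsto_zero_atBot⟩
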